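/- Let S be the unilateral shift on ℓ²(ℕ; ℂ), i.e., the bounded operator with (S f)(0) = 0 and (S f)(n+1) = f(n). Then for every nonempty word w(x, y) in two noncommuting variables (given by a nonempty finite list of Booleans selecting S or S* in each factor), the operator norm satisfies ‖w(S, S*)‖ = 1. -/

import Mathlib

open ContinuousLinearMap
open scoped ENNReal

/-- Evaluation of a word in two noncommuting letters at the pair `(X, Y)`: the list of
Booleans selects `X` (for `true`) or `Y` (for `false`) in each factor, and the factors
are composed in order. -/
def wordEval {H : Type*} [NormedAddCommGroup H] [InnerProductSpace ℂ H]
    (X Y : H →L[ℂ] H) (w : List Bool) : H →L[ℂ] H :=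
  (w.map (fun b => if b then X else Y)).prod

namespace NormWordShiftAux

noncomputable def e (n : ℕ) : lp (fun _ : ℕ => ℂ) 2 := lp.single 2 n (1 : ℂ)

lemma htp : (0 : ℝ) < (2 : ℝ≥0∞).toReal := by norm_num

lemma norm_e (n : ℕ) : ‖e n‖ = 1 := by
  simpa [e] using lp.norm_single (E := fun _ : ℕ => ℂ) (p := 2) (by norm_num) n (1 : ℂ)

variable (S : lp (fun _ : ℕ => ℂ) 2 →L[ℂ] lp (fun _ : ℕ => ℂ) 2)
variable (hS : ∀ f : lp (fun _ : ℕ => ℂ) 2, S f 0 = 0 ∧ ∀ n, S f (n + 1) = f n)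

include hS

lemma isom (f : lp (fun _ : ℕ => ℂ) 2) : ‖S f‖ = ‖f‖ := by
  have h1 : HasSum (fun i => ‖(S f : ∀ _ : ℕ, ℂ) i‖ ^ (2 : ℝ≥0∞).toReal)
      (‖S f‖ ^ (2 : ℝ≥0∞).toReal) := lp.hasSum_norm htp (S f)
  have h2 : HasSum (fun i => ‖(f : ∀ _ : ℕ, ℂ) i‖ ^ (2 : ℝ≥0∞).toReal)
      (‖f‖ ^ (2 : ℝ≥0∞).toReal) := lp.hasSum_norm htp f
  have hinj : Function.Injective Nat.succ := fun a b h => Nat.succ_injective h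
  have hcomp : (fun i => ‖(S f : ∀ _ : ℕ, ℂ) i‖ ^ (2 : ℝ≥0∞).toReal) ∘ Nat.succ
      = fun i => ‖(f : ∀ _ : ℕ, ℂ) i‖ ^ (2 : ℝ≥0∞).toReal := by
    funext n
    simp [Function.comp, (hS f).2 n]
  have hzero : ∀ x ∉ Set.range Nat.succ,
      ‖(S f : ∀ _ : ℕ, ℂ) x‖ ^ (2 : ℝ≥0∞).toReal = 0 := by
    intro x hx
    have hx0 : x = 0 := by
      cases x with
      | zero => rfl
      | succ k => exact absurd ⟨k, rfl⟩ hx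
    subst hx0
    rw [(hS f).1]
    simp [Real.zero_rpow (ne_of_gt htp)]
  have h3 : HasSum ((fun i => ‖(S f : ∀ _ : ℕ, ℂ) i‖ ^ (2 : ℝ≥0∞).toReal) ∘ Nat.succ)
      (‖S f‖ ^ (2 : ℝ≥0∞).toReal) := (hinj.hasSum_iff hzero).2 h1
  rw [hcomp] at h3
  have heq : ‖S f‖ ^ (2 : ℝ≥0∞).toReal = ‖f‖ ^ (2 : ℝ≥0∞).toReal := h3.unique h2
  exact Real.rpow_left_injOn (ne_of_gt htp) (norm_nonneg _) (norm_nonneg _) heq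

lemma norm_S_le : ‖S‖ ≤ 1 := by
  refine opNorm_le_bound S zero_le_one (fun f => ?_)
  rw [isom S hS f, one_mul]

lemma S_e (n : ℕ) : S (e n) = e (n + 1) := by
  apply lp.ext
  funext m
  cases m with
  | zero =>
      rw [(hS (e n)).1]
      have : (0 : ℕ) ≠ n + 1 := by omega
      simp [e, lp.single_apply, this]
  | succ k =>
      rw [(hS (e n)).2 k]
      simp only [e, lp.single_apply]
      by_cases h : k = n
      · subst h; simp
      · rw [Pi.single_apply, Pi.single_apply, if_neg h, if_neg (by omega)]

omit hS in
lemma inner_e (k : ℕ) (f : lp (fun _ : ℕ => ℂ) 2) :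
    (inner ℂ (e k) f : ℂ) = f k := by
  rw [e, lp.inner_single_left]
  simp [RCLike.inner_apply]

lemma adj_e_succ (n : ℕ) : adjoint S (e (n + 1)) = e n := by
  refine ext_inner_right ℂ (fun f => ?_)
  rw [adjoint_inner_left, inner_e, inner_e, (hS f).2 n]

lemma adj_e_zero : adjoint S (e 0) = 0 := by
  refine ext_inner_right ℂ (fun f => ?_)
  rw [adjoint_inner_left, inner_e, (hS f).1]
  simp

lemma key : ∀ (w : List Bool) (n : ℕ),
    ∃ m, n ≤ m ∧ wordEval S (adjoint S) w (e (n + w.length)) = e m := by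
  intro w
  induction w with
  | nil =>
      intro n
      exact ⟨n, le_refl n, by simp [wordEval]⟩
  | cons b t ih =>
      intro n
      obtain ⟨m, hm, he⟩ := ih (n + 1)
      have hlen : n + (b :: t).length = (n + 1) + t.length := by
        simp only [List.length_cons]; omega
      have hword : wordEval S (adjoint S) (b :: t)
          = (if b then S else adjoint S) * wordEval S (adjoint S) t := by
        simp [wordEval, List.map_cons, List.prod_cons]
      rw [hword, hlen]
      cases b with
      | true =>
          refine ⟨m + 1, by omega, ?_⟩
          simp only [if_pos rfl, ↓reduceIte, ContinuousLinearMap.mul_apply, he]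
          exact S_e S hS m
      | false =>
          obtain ⟨k, rfl⟩ : ∃ k, m = k + 1 := ⟨m - 1, by omega⟩
          refine ⟨k, by omega, ?_⟩
          simp only [Bool.false_eq_true, if_false, ↓reduceIte, ContinuousLinearMap.mul_apply, he]
          exact adj_e_succ S hS k

lemma norm_word_le (w : List Bool) : ‖wordEval S (adjoint S) w‖ ≤ 1 := by
  induction w with
  | nil =>
      have : wordEval S (adjoint S) ([] : List Bool)
          = ContinuousLinearMap.id ℂ (lp (fun _ : ℕ => ℂ) 2) := by
        simp [wordEval]; rfl
      rw [this]
      exact norm_id_le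
  | cons b t ih =>
      have hword : wordEval S (adjoint S) (b :: t)
          = (if b then S else adjoint S) * wordEval S (adjoint S) t := by
        simp [wordEval, List.map_cons, List.prod_cons]
      rw [hword]
      have h1 : ‖(if b then S else adjoint S)‖ ≤ 1 := by
        cases b
        · rw [if_neg (by simp)]
          calc ‖adjoint S‖ = ‖S‖ :=
                (adjoint : (lp (fun _ : ℕ => ℂ) 2 →L[ℂ] lp (fun _ : ℕ => ℂ) 2)
                  ≃ₗᵢ⋆[ℂ] (lp (fun _ : ℕ => ℂ) 2 →L[ℂ] lp (fun _ : ℕ => ℂ) 2)).norm_map S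
            _ ≤ 1 := norm_S_le S hS
        · rw [if_pos rfl]; exact norm_S_le S hS
      calc ‖(if b then S else adjoint S) * wordEval S (adjoint S) t‖
          ≤ ‖(if b then S else adjoint S)‖ * ‖wordEval S (adjoint S) t‖ := norm_mul_le _ _
        _ ≤ 1 * 1 := by
            exact mul_le_mul h1 ih (norm_nonneg _) zero_le_one
        _ = 1 := one_mul 1

end NormWordShiftAux

/-- For the unilateral shift `S` on `ℓ²(ℕ)`, every nonempty word in `S` and `S*` has
operator norm `1`. -/
theorem norm_word_shift_eq_one
    (S : lp (fun _ : ℕ => ℂ) 2 →L[ℂ] lp (fun _ : ℕ => ℂ) 2)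
    (hS : ∀ f : lp (fun _ : ℕ => ℂ) 2, S f 0 = 0 ∧ ∀ n, S f (n + 1) = f n)
    (w : List Bool) (hw : w ≠ []) :
    ‖wordEval S (adjoint S) w‖ = 1 := by
  open NormWordShiftAux in
  refine le_antisymm (norm_word_le S hS w) ?_
  obtain ⟨m, _, he⟩ := NormWordShiftAux.key S hS w 0
  have h1 : ‖wordEval S (adjoint S) w (NormWordShiftAux.e (0 + w.length))‖
      ≤ ‖wordEval S (adjoint S) w‖ * ‖NormWordShiftAux.e (0 + w.length)‖ :=
    le_opNorm _ _
  rw [he, NormWordShiftAux.norm_e, NormWordShiftAux.norm_e, mul_one] at h1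
  exact h1
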